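/- Let (X,≤) be a finite median join-semilattice with normalized rank function r and covering-graph shortest-path metric δ (which coincides with the rank metric d_r(x,y) = 2r(x∨y) − r(x) − r(y)), and for a profile (x_1,…,x_n) ∈ X^n let m(x_1,…,x_n) = argmin_{x∈X} Σ_{i=1}^n δ(x,x_i) be its metric median set. Then for every n and every profile (x_1,…,x_n), the co-majority outcome f^∂maj(x_N) = ⋀_{S ∈ W^maj} (⋁_{i∈S} x_i), with W^maj = {S ⊆ N : |S| ≥ ⌊(n+2)/2⌋}, belongs to m(x_1,…,x_n); and if n is odd the metric median set is a singleton and f^∂maj(x_N) equals the unique metric median of the profile. -/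

import Mathlib

/-- A preorder (reflexive transitive relation) on `X`, used as an agent's
preference over outcomes. -/
structure Pref (X : Type*) where
  rel : X → X → Prop
  refl : ∀ x, rel x x
  trans : ∀ x y z, rel x y → rel y z → rel x z

namespace Pref

/-- Strict (asymmetric) part of a preference preorder. -/
def strict {X : Type*} (R : Pref X) (x y : X) : Prop := R.rel x y ∧ ¬ R.rel y x

/-- `t` is the unique maximum of the preorder `R`. -/
def IsTop {X : Type*} (R : Pref X) (t : X) : Prop :=
  (∀ y, R.rel t y) ∧ ∀ t', (∀ y, R.rel t' y) → t' = t

end Pref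

/-- The interval `I^μ(x,y) = {z : z = μ(x,y,z)}` induced by a ternary median operation. -/
def medInterval {X : Type*} (μ : X → X → X → X) (x y : X) : Set X :=
  {z | μ x y z = z}

/-- A preorder on `X` is locally unimodal (single-peaked) w.r.t. the betweenness induced
by the median `μ`: it has a unique maximum `t`, and any outcome lying strictly between
`t` and another outcome `y` is not worse than `y`. -/
def LocallyUnimodal {X : Type*} (μ : X → X → X → X) (R : Pref X) : Prop :=
  ∃ t, R.IsTop t ∧ ∀ y z, z ∈ medInterval μ t y → z ≠ t → ¬ R.strict y z

/-- A rich domain of locally unimodal preorders: for all `x,y` it contains a preorder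
with top `x` whose upper contour set at `y` is exactly the interval `I^μ(x,y)`. -/
def RichDomain {X : Type*} (μ : X → X → X → X) (D : Set (Pref X)) : Prop :=
  (∀ R ∈ D, LocallyUnimodal μ R) ∧
  ∀ x y : X, ∃ R ∈ D, R.IsTop x ∧ {z | R.rel z y} = medInterval μ x y

/-- Strategy-proofness of an aggregation rule on profiles drawn from the domain `D`:
no agent `i` whose true preference lies in `D` (with top `tops i`) can strictly gain
by reporting `y` instead of her top. -/
def StrategyProofOn {X N : Type*} [DecidableEq N]
    (f : (N → X) → X) (D : Set (Pref X)) : Prop :=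
  ∀ prefs : N → Pref X, (∀ i, prefs i ∈ D) →
    ∀ tops : N → X, (∀ j, (prefs j).IsTop (tops j)) →
      ∀ (i : N) (y : X),
        ¬ (prefs i).strict (f (Function.update tops i y)) (f tops)

/-- `B_μ`-monotonicity: `f(x_N)` always lies in the median interval between `x_i` and
the outcome obtained when `i` deviates to `y`. -/
def BMuMonotonic {X N : Type*} [DecidableEq N]
    (μ : X → X → X → X) (f : (N → X) → X) : Prop :=
  ∀ (x : N → X) (i : N) (y : X),
    f x ∈ medInterval μ (x i) (f (Function.update x i y))

/-- `m` is meet-irreducible: whenever `m` is the greatest lower bound of a set `Y`,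
`m` itself belongs to `Y`. -/
def MeetIrred {X : Type*} [Preorder X] (m : X) : Prop :=
  ∀ Y : Set X, IsGLB Y m → m ∈ Y

/-- `j` is join-irreducible: whenever `j` is the least upper bound of a set `Y`,
`j` itself belongs to `Y`. -/
def JoinIrred {X : Type*} [Preorder X] (j : X) : Prop :=
  ∀ Y : Set X, IsLUB Y j → j ∈ Y

/-- Monotonic `M_X`-independence of an aggregation rule. -/
def MonotonicMIndependent {X N : Type*} [Preorder X] (f : (N → X) → X) : Prop :=
  ∀ (x y : N → X) (m : X), MeetIrred m →
    {i | x i ≤ m} ⊆ {i | y i ≤ m} → f x ≤ m → f y ≤ m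

/-- Upper distributivity: every principal order filter `↑u` is a distributive lattice,
expressed by the identity `x ⊔ (y ⊓ z) = (x ⊔ y) ⊓ (x ⊔ z)` for elements above a
common lower bound `u` (meets expressed via `IsGLB`). -/
def UpperDistributive (X : Type*) [SemilatticeSup X] : Prop :=
  ∀ u x y z m₁ m₂ : X, u ≤ x → u ≤ y → u ≤ z →
    IsGLB {y, z} m₁ → IsGLB {x ⊔ y, x ⊔ z} m₂ → x ⊔ m₁ = m₂

/-- Co-coronation (meet-Helly): if the three pairwise meets of `x,y,z` exist then the
meet of `{x,y,z}` exists. -/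
def MeetHelly (X : Type*) [SemilatticeSup X] : Prop :=
  ∀ x y z : X, (∃ a, IsGLB {x, y} a) → (∃ b, IsGLB {y, z} b) →
    (∃ c, IsGLB {x, z} c) → ∃ d, IsGLB ({x, y, z} : Set X) d

/-- `μ` is the median operation: `μ(x,y,z)` is the meet of `x⊔y`, `y⊔z`, `x⊔z`. -/
def IsMedianFn {X : Type*} [SemilatticeSup X] (μ : X → X → X → X) : Prop :=
  ∀ x y z : X, IsGLB {x ⊔ y, y ⊔ z, x ⊔ z} (μ x y z)

/-- Anonymity: invariance of the rule under permutations of the agents. -/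
def Anonymous {X N : Type*} (f : (N → X) → X) : Prop :=
  ∀ (x : N → X) (σ : Equiv.Perm N), f (x ∘ σ) = f x

/-- Bi-idempotence: if every agent proposes one of the two outcomes `y, z`, the rule
selects one of `y, z`. -/
def BiIdempotent {X N : Type*} (f : (N → X) → X) : Prop :=
  ∀ (x : N → X) (y z : X), (∀ i, x i = y ∨ x i = z) → f x = y ∨ f x = z

/-- The co-majority rule: `f(x_N)` is the meet over all majority coalitions `S`
(of size at least `⌊(|N|+2)/2⌋`) of the joins `⋁_{i ∈ S} x_i`. -/
def IsCoMajority {X N : Type*} [SemilatticeSup X] [Fintype N] (f : (N → X) → X) : Prop :=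
  ∀ x : N → X,
    IsGLB {z | ∃ S : Finset N, (Fintype.card N + 2) / 2 ≤ S.card ∧ IsLUB (x '' ↑S) z} (f x)

/-- An order filter of the poset of coalitions `(P(N), ⊆)`. -/
def OrderFilterN {N : Type*} (F : Set (Set N)) : Prop :=
  ∀ S T : Set N, S ∈ F → S ⊆ T → T ∈ F

/-- The locally `m`-winning coalitions of the rule `f`. -/
def winningCoalitions {X N : Type*} [Preorder X] (f : (N → X) → X) (m : X) : Set (Set N) :=
  {T | ∃ x : N → X, {i | x i ≤ m} = T ∧ f x ≤ m}

/-- Shortest-path distance in the covering graph of a partial order. -/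
noncomputable def covDist {X : Type*} [PartialOrder X] (x y : X) : ℕ :=
  sInf {n | ∃ p : ℕ → X, p 0 = x ∧ p n = y ∧ ∀ k < n, p k ⋖ p (k + 1) ∨ p (k + 1) ⋖ p k}

section Aux
variable {X : Type*} [SemilatticeSup X] [Fintype X]

open Finset

/-- existence of GLB of any set with a lower bound, in a finite sup-semilattice -/
lemma exists_isGLB_of_lb (S : Set X) (l0 : X) (h : ∀ s ∈ S, l0 ≤ s) :
    ∃ g, IsGLB S g := by
  classical
  set T : Finset X := Finset.univ.filter (fun l => ∀ s ∈ S, l ≤ s) with hT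
  have hTne : T.Nonempty := ⟨l0, by simpa [hT] using h⟩
  refine ⟨T.sup' hTne id, ?_, ?_⟩
  · intro s hs
    exact Finset.sup'_le _ _ (fun l hl => by simp [hT] at hl; exact hl s hs)
  · intro l hl
    exact Finset.le_sup' id (by simp [hT]; exact hl)

/-- separation by a meet-irreducible -/
lemma separation {x y : X} (h : ¬ x ≤ y) :
    ∃ m, MeetIrred m ∧ y ≤ m ∧ ¬ x ≤ m := by
  classical
  have hne : (Finset.univ.filter (fun z => y ≤ z ∧ ¬ x ≤ z)).Nonempty :=
    ⟨y, by simp [h]⟩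
  obtain ⟨m, hm, hmax⟩ : ∃ m ∈ Finset.univ.filter (fun z => y ≤ z ∧ ¬ x ≤ z),
      ∀ z ∈ Finset.univ.filter (fun z => y ≤ z ∧ ¬ x ≤ z), ¬ m < z :=
    let ⟨m, hm⟩ := Finset.exists_maximal hne
    ⟨m, hm.1, fun z hz hlt => lt_irrefl _ (hlt.trans_le (hm.2 hz hlt.le))⟩
  simp only [Finset.mem_filter, Finset.mem_univ, true_and] at hm
  refine ⟨m, ?_, hm.1, hm.2⟩
  intro Y hY
  by_contra hmY
  have hx : x ∈ lowerBounds Y := by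
    intro z hz
    have hmz : m < z := lt_of_le_of_ne (hY.1 hz) (fun e => hmY (e ▸ hz))
    have : ¬ (y ≤ z ∧ ¬ x ≤ z) := by
      intro hc
      exact hmax z (by simp [hc.1, hc.2]) hmz
    push_neg at this
    exact this (hm.1.trans hmz.le)
  exact hm.2 (hY.2 hx)

lemma le_of_forall_mi {x y : X} (h : ∀ m, MeetIrred m → y ≤ m → x ≤ m) : x ≤ y := by
  by_contra hxy
  obtain ⟨m, hmi, hym, hxm⟩ := separation hxy
  exact hxm (h m hmi hym)

/-- meet-irreducibles are prime -/
lemma prime_pair (hud : UpperDistributive X) {m p q g : X} (hm : MeetIrred m)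
    (hg : IsGLB {p, q} g) (hgm : g ≤ m) : p ≤ m ∨ q ≤ m := by
  have h1 : g ≤ p := hg.1 (by simp)
  have h2 : g ≤ q := hg.1 (by simp)
  obtain ⟨h, hh⟩ := exists_isGLB_of_lb {m ⊔ p, m ⊔ q} m
    (by rintro s (rfl | rfl) <;> simp)
  have := hud g m p q g h hgm h1 h2 hg hh
  rw [sup_eq_left.2 hgm] at this
  have hmem := hm _ (this.symm ▸ hh)
  rcases hmem with h' | h'
  · exact Or.inl (le_sup_right.trans_eq h'.symm)
  · rcases h' with h'
    exact Or.inr (le_sup_right.trans_eq h'.symm)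

lemma prime_finset (hud : UpperDistributive X) {m : X} (hm : MeetIrred m) :
    ∀ T : Finset X, T.Nonempty → ∀ g, IsGLB (↑T : Set X) g → g ≤ m → ∃ t ∈ T, t ≤ m := by
  classical
  intro T hT
  induction hT using Finset.Nonempty.cons_induction with
  | singleton t =>
    intro g hg hgm
    have : g = t := hg.unique (by simpa using (isGLB_singleton : IsGLB {t} t))
    exact ⟨t, by simp, this ▸ hgm⟩
  | cons a T ha hTne ih =>
    intro g hg hgm
    have hglbT : ∃ g', IsGLB (↑T : Set X) g' :=
      exists_isGLB_of_lb _ g (fun s hs => hg.1 (by simp [Finset.mem_coe.1 hs]))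
    obtain ⟨g', hg'⟩ := hglbT
    have hpair : IsGLB {a, g'} g := by
      constructor
      · rintro s (rfl | rfl)
        · exact hg.1 (by simp)
        · exact hg'.2 (fun t ht => hg.1 (by simp [Finset.mem_coe.1 ht]))
      · intro l hl
        refine hg.2 ?_
        intro t ht
        rw [Finset.coe_cons] at ht
        rcases ht with rfl | ht
        · exact hl (by simp)
        · exact le_trans (hl (by simp)) (hg'.1 ht)
    rcases prime_pair hud hm hpair hgm with h | h
    · exact ⟨a, by simp, h⟩
    · obtain ⟨t, ht, htm⟩ := ih g' hg' h
      exact ⟨t, by simp [ht], htm⟩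

lemma prime_set (hud : UpperDistributive X) {m : X} (hm : MeetIrred m)
    (S : Set X) (hS : S.Nonempty) (g : X) (hg : IsGLB S g) (hgm : g ≤ m) :
    ∃ z ∈ S, z ≤ m := by
  classical
  have hfin : S.Finite := Set.toFinite S
  obtain ⟨t, ht, htm⟩ := prime_finset hud hm hfin.toFinset
    (hfin.toFinset_nonempty.2 hS) g (by rwa [hfin.coe_toFinset]) hgm
  exact ⟨t, hfin.mem_toFinset.1 ht, htm⟩

/-- exactly one meet-irreducible separates a cover -/
lemma cover_exists {a b : X} (h : a ⋖ b) :
    ∃ m, MeetIrred m ∧ a ≤ m ∧ ¬ b ≤ m :=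
  separation (fun hba => absurd (lt_of_lt_of_le h.1 hba) (lt_irrefl a))

lemma cover_glb {a b m : X} (h : a ⋖ b) (ham : a ≤ m) (hbm : ¬ b ≤ m) :
    IsGLB {m, b} a := by
  constructor
  · rintro s (rfl | rfl)
    · exact ham
    · exact h.1.le
  · intro l hl
    have hlm : l ≤ m := hl (by simp)
    have hlb : l ≤ b := hl (by simp)
    have : l ⊔ a ≤ b := sup_le hlb h.1.le
    rcases eq_or_lt_of_le this with he | hlt
    · exact absurd (he ▸ (sup_le hlm ham)) hbm
    · rcases eq_or_lt_of_le (le_sup_right : a ≤ l ⊔ a) with he2 | hlt2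
      · exact le_sup_left.trans he2.symm.le
      · exact absurd hlt (h.2 hlt2)

lemma cover_unique (hud : UpperDistributive X) {a b m1 m2 : X} (h : a ⋖ b)
    (hm1 : MeetIrred m1) (h1 : a ≤ m1) (hb1 : ¬ b ≤ m1)
    (hm2 : MeetIrred m2) (h2 : a ≤ m2) (hb2 : ¬ b ≤ m2) : m1 = m2 := by
  have key : ∀ p q : X, MeetIrred p → a ≤ p → ¬ b ≤ p → a ≤ q → ¬ b ≤ q → q ≤ p := by
    intro p q hp hap hbp haq hbq
    have hglb : IsGLB {q, b} a := cover_glb h haq hbq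
    obtain ⟨g, hg⟩ := exists_isGLB_of_lb {p ⊔ q, p ⊔ b} p
      (by rintro s (rfl | rfl) <;> simp)
    have := hud a p q b a g hap haq h.1.le hglb hg
    rw [sup_eq_left.2 hap] at this
    have hmem := hp _ (this.symm ▸ hg)
    rcases hmem with h' | h'
    · exact le_sup_right.trans h'.symm.le
    · rcases h' with h'
      exact absurd (le_sup_right.trans h'.symm.le) hbp
  exact le_antisymm (key m2 m1 hm2 h2 hb2 h1 hb1) (key m1 m2 hm1 h1 hb1 h2 hb2)

variable (X) in
noncomputable def Mfin : Finset X :=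
  @Finset.filter _ (fun m => MeetIrred m) (Classical.decPred _) Finset.univ

/-- the set of meet-irreducibles separating x from y -/
noncomputable def sep (x y : X) : Finset X :=
  @Finset.filter _ (fun m => ¬ (x ≤ m ↔ y ≤ m)) (Classical.decPred _) (Mfin X)

noncomputable def Dd (x y : X) : ℕ := (sep x y).card

lemma mem_sep {x y m : X} : m ∈ sep x y ↔ MeetIrred m ∧ ¬ (x ≤ m ↔ y ≤ m) := by
  classical
  simp [sep, Mfin, Finset.mem_filter]

lemma sep_comm (x y : X) : sep x y = sep y x := by
  ext m; simp [mem_sep]; tauto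

lemma Dd_comm (x y : X) : Dd x y = Dd y x := by rw [Dd, Dd, sep_comm]

lemma Dd_self (x : X) : Dd x x = 0 := by
  simp [Dd, Finset.card_eq_zero]
  ext m; simp [mem_sep]

lemma Dd_triangle (x y z : X) : Dd x z ≤ Dd x y + Dd y z := by
  classical
  have hsub : sep x z ⊆ sep x y ∪ sep y z := by
    intro m hm
    rw [mem_sep] at hm
    rw [Finset.mem_union, mem_sep, mem_sep]
    by_cases h : x ≤ m ↔ y ≤ m
    · exact Or.inr ⟨hm.1, fun h' => hm.2 (h.trans h')⟩
    · exact Or.inl ⟨hm.1, h⟩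
  exact le_trans (Finset.card_le_card hsub) (Finset.card_union_le _ _)

lemma eq_of_sep_eq {x y : X} (h : ∀ m, MeetIrred m → (x ≤ m ↔ y ≤ m)) : x = y := by
  refine le_antisymm (le_of_forall_mi fun m hm hym => (h m hm).2 hym)
    (le_of_forall_mi fun m hm hxm => (h m hm).1 hxm)

lemma sep_cover (hud : UpperDistributive X) {a b : X} (h : a ⋖ b) :
    ∃ m0, sep a b = {m0} := by
  classical
  obtain ⟨m0, hm0, ham, hbm⟩ := cover_exists h
  refine ⟨m0, ?_⟩
  ext m
  simp only [mem_sep, Finset.mem_singleton]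
  constructor
  · rintro ⟨hmi, hne⟩
    have hab : a ≤ m ∧ ¬ b ≤ m := by
      by_cases hbm' : b ≤ m
      · exact absurd (iff_of_true (h.1.le.trans hbm') hbm') hne
      · by_cases ham' : a ≤ m
        · exact ⟨ham', hbm'⟩
        · exact absurd (iff_of_false ham' hbm') hne
    exact cover_unique hud h hmi hab.1 hab.2 hm0 ham hbm
  · rintro rfl
    exact ⟨hm0, fun hi => hbm (hi.1 ham)⟩

lemma Dd_cover (hud : UpperDistributive X) {a b : X} (h : a ⋖ b) : Dd a b = 1 := by
  obtain ⟨m0, hm0⟩ := sep_cover hud h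
  simp [Dd, hm0]

lemma mem_sep_of_le {u v m : X} (huv : u ≤ v) :
    m ∈ sep u v ↔ MeetIrred m ∧ u ≤ m ∧ ¬ v ≤ m := by
  rw [mem_sep]
  constructor
  · rintro ⟨hmi, hne⟩
    by_cases hv : v ≤ m
    · exact absurd (iff_of_true (huv.trans hv) hv) hne
    · by_cases hu : u ≤ m
      · exact ⟨hmi, hu, hv⟩
      · exact absurd (iff_of_false hu hv) hne
  · rintro ⟨hmi, hu, hv⟩
    exact ⟨hmi, fun hi => hv (hi.1 hu)⟩

lemma Dd_cover_le (hud : UpperDistributive X) {u b v : X} (h : u ⋖ b) (hbv : b ≤ v) :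
    Dd u v = Dd b v + 1 := by
  classical
  obtain ⟨m0, hm0, hum, hbm⟩ := cover_exists h
  have hins : sep u v = insert m0 (sep b v) := by
    ext m
    rw [mem_sep_of_le (h.1.le.trans hbv), Finset.mem_insert, mem_sep_of_le hbv]
    constructor
    · rintro ⟨hmi, hu, hv⟩
      by_cases hb : b ≤ m
      · exact Or.inr ⟨hmi, hb, hv⟩
      · exact Or.inl (cover_unique hud h hmi hu hb hm0 hum hbm)
    · rintro (rfl | ⟨hmi, hb, hv⟩)
      · exact ⟨hm0, hum, fun hv => hbm (hbv.trans hv)⟩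
      · exact ⟨hmi, h.1.le.trans hb, hv⟩
  have hnm : m0 ∉ sep b v := by
    rw [mem_sep_of_le hbv]
    rintro ⟨-, hb, -⟩
    exact hbm hb
  rw [Dd, Dd, hins, Finset.card_insert_of_notMem hnm, Nat.add_comm]

lemma exists_chain_up (hud : UpperDistributive X) :
    ∀ (fuel : ℕ) (u v : X), Dd u v ≤ fuel → u ≤ v →
    ∃ p : ℕ → X, p 0 = u ∧ p (Dd u v) = v ∧ ∀ k < Dd u v, p k ⋖ p (k + 1) := by
  intro fuel
  induction fuel with
  | zero =>
    intro u v hfuel huv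
    have h0 : Dd u v = 0 := Nat.le_zero.1 hfuel
    have huv' : u = v := by
      by_contra hne
      have hlt : ¬ v ≤ u := fun h => hne (le_antisymm huv h)
      obtain ⟨m, hmi, hum, hvm⟩ := separation hlt
      have : m ∈ sep u v := (mem_sep_of_le huv).2 ⟨hmi, hum, hvm⟩
      simp [Dd, Finset.card_eq_zero] at h0
      rw [h0] at this
      exact absurd this (Finset.notMem_empty m)
    subst huv'
    exact ⟨fun _ => u, rfl, by rw [h0], by rw [h0]; intro k hk; omega⟩
  | succ n ih =>
    intro u v hfuel huv
    rcases eq_or_lt_of_le huv with rfl | hlt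
    · rw [Dd_self]
      exact ⟨fun _ => u, rfl, rfl, by intro k hk; omega⟩
    · classical
      have hne : (Finset.univ.filter (fun z => u < z ∧ z ≤ v)).Nonempty :=
        ⟨v, by simp [hlt]⟩
      obtain ⟨b, hb, hmin⟩ : ∃ b ∈ Finset.univ.filter (fun z => u < z ∧ z ≤ v),
          ∀ z ∈ Finset.univ.filter (fun z => u < z ∧ z ≤ v), ¬ z < b :=
        let ⟨b, hb⟩ := Finset.exists_minimal hne
        ⟨b, hb.1, fun z hz hlt => lt_irrefl _ (hlt.trans_le (hb.2 hz hlt.le))⟩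
      simp only [Finset.mem_filter, Finset.mem_univ, true_and] at hb
      have hcov : u ⋖ b := by
        refine ⟨hb.1, fun c hc hcb => ?_⟩
        exact hmin c (by simp [hc, hcb.le.trans hb.2]) hcb
      have hDd : Dd u v = Dd b v + 1 := Dd_cover_le hud hcov hb.2
      have hfuel' : Dd b v ≤ n := by omega
      obtain ⟨p, hp0, hpn, hpc⟩ := ih b v hfuel' hb.2
      refine ⟨fun k => if k = 0 then u else p (k - 1), by simp, ?_, ?_⟩
      · rw [hDd]; simpa using hpn
      · intro k hk
        rcases Nat.eq_zero_or_pos k with rfl | hkpos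
        · simpa [hp0] using hcov
        · have h1 : ¬ (k = 0) := by omega
          have h2 : ¬ (k + 1 = 0) := by omega
          simp only [h1, h2, if_false]
          have : k - 1 < Dd b v := by omega
          have := hpc (k - 1) this
          have he : k - 1 + 1 = k + 1 - 1 := by omega
          rwa [he] at this

lemma covDist_le (hud : UpperDistributive X) (x y : X) :
    (Dd x y) ∈ {n | ∃ p : ℕ → X, p 0 = x ∧ p n = y ∧
      ∀ k < n, p k ⋖ p (k + 1) ∨ p (k + 1) ⋖ p k} := by
  classical
  -- build path x → x⊔y → y
  have hx : x ≤ x ⊔ y := le_sup_left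
  have hy : y ≤ x ⊔ y := le_sup_right
  obtain ⟨p1, hp10, hp1n, hp1c⟩ := exists_chain_up hud (Dd x (x ⊔ y)) x (x ⊔ y) le_rfl hx
  obtain ⟨p2, hp20, hp2n, hp2c⟩ := exists_chain_up hud (Dd y (x ⊔ y)) y (x ⊔ y) le_rfl hy
  set n1 := Dd x (x ⊔ y)
  set n2 := Dd y (x ⊔ y)
  have hsplit : Dd x y = n1 + n2 := by
    classical
    have hdisj : Disjoint (sep x (x ⊔ y)) (sep y (x ⊔ y)) := by
      rw [Finset.disjoint_left]
      intro m hm1 hm2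
      rw [mem_sep_of_le hx] at hm1
      rw [mem_sep_of_le hy] at hm2
      exact hm1.2.2 (sup_le hm1.2.1 hm2.2.1)
    have hunion : sep x y = sep x (x ⊔ y) ∪ sep y (x ⊔ y) := by
      ext m
      rw [Finset.mem_union, mem_sep, mem_sep_of_le hx, mem_sep_of_le hy]
      constructor
      · rintro ⟨hmi, hne⟩
        by_cases hxm : x ≤ m <;> by_cases hym : y ≤ m
        · exact absurd (iff_of_true hxm hym) hne
        · exact Or.inl ⟨hmi, hxm, fun h => hym (hy.trans h)⟩
        · exact Or.inr ⟨hmi, hym, fun h => hxm (hx.trans h)⟩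
        · exact absurd (iff_of_false hxm hym) hne
      · rintro (⟨hmi, hxm, hsm⟩ | ⟨hmi, hym, hsm⟩)
        · exact ⟨hmi, fun h => hsm (sup_le hxm (h.1 hxm))⟩
        · exact ⟨hmi, fun h => hsm (sup_le (h.2 hym) hym)⟩
    show (sep x y).card = (sep x (x ⊔ y)).card + (sep y (x ⊔ y)).card
    rw [hunion, Finset.card_union_of_disjoint hdisj]
  refine ⟨fun k => if k ≤ n1 then p1 k else p2 (n1 + n2 - k), by simp [hp10], ?_, ?_⟩
  · rw [hsplit]
    rcases Nat.eq_zero_or_pos n2 with h2 | h2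
    · have h20 : y = x ⊔ y := by rw [← hp2n, h2, hp20]
      simp [h2, hp1n, ← h20]
    · have : ¬ (n1 + n2 ≤ n1) := by omega
      simp [this, hp20]
  · rw [hsplit]
    intro k hk
    by_cases hk1 : k + 1 ≤ n1
    · have : k ≤ n1 := by omega
      simp only [this, hk1, if_true]
      exact Or.inl (hp1c k (by omega))
    · by_cases hkeq : k + 1 = n1 + 1
      · have hkn1 : k = n1 := by omega
        subst hkn1
        beta_reduce
        rw [if_pos le_rfl, if_neg (by omega : ¬ n1 + 1 ≤ n1)]
        refine Or.inr ?_
        have hidx : n1 + n2 - (n1 + 1) = n2 - 1 := by omega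
        rw [hidx]
        have := hp2c (n2 - 1) (by omega)
        have he : n2 - 1 + 1 = n2 := by omega
        rw [he] at this
        rw [hp1n, ← hp2n]
        exact this
      · have hknot : ¬ (k ≤ n1) := by omega
        simp only [hk1, hknot, if_false]
        refine Or.inr ?_
        have h1 : n1 + n2 - k < n2 := by omega
        have := hp2c (n1 + n2 - (k+1)) (by omega)
        have he : n1 + n2 - (k + 1) + 1 = n1 + n2 - k := by omega
        rwa [he] at this

lemma Dd_le_path (hud : UpperDistributive X) (x : X) :
    ∀ (n : ℕ) (p : ℕ → X), p 0 = x →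
      (∀ k < n, p k ⋖ p (k + 1) ∨ p (k + 1) ⋖ p k) → Dd x (p n) ≤ n := by
  intro n
  induction n with
  | zero => intro p hp0 _; rw [← hp0]; simp [Dd_self]
  | succ n ih =>
    intro p hp0 hpc
    have h1 : Dd x (p n) ≤ n := ih p hp0 (fun k hk => hpc k (by omega))
    have h2 : Dd (p n) (p (n+1)) = 1 := by
      rcases hpc n (by omega) with h | h
      · exact Dd_cover hud h
      · rw [Dd_comm]; exact Dd_cover hud h
    calc Dd x (p (n+1)) ≤ Dd x (p n) + Dd (p n) (p (n+1)) := Dd_triangle _ _ _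
    _ ≤ n + 1 := by omega

lemma covDist_eq (hud : UpperDistributive X) (x y : X) : covDist x y = Dd x y := by
  refine le_antisymm (Nat.sInf_le (covDist_le hud x y)) (le_csInf ⟨_, covDist_le hud x y⟩ ?_)
  rintro n ⟨p, hp0, hpn, hpc⟩
  rw [← hpn]
  exact Dd_le_path hud x n p hp0 hpc

lemma isLUB_sup'' {N : Type*} {S : Finset N} (hS : S.Nonempty) (x : N → X) :
    IsLUB (x '' ↑S) (S.sup' hS x) := by
  constructor
  · rintro z ⟨i, hi, rfl⟩
    exact Finset.le_sup' x (by exact_mod_cast hi)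
  · intro l hl
    exact Finset.sup'_le _ _ (fun i hi => hl ⟨i, hi, rfl⟩)

end Aux

/-- In a finite median join-semilattice, the co-majority outcome `c` of a profile `x`
is a metric median of the profile w.r.t. the covering-graph shortest-path metric; and
when the number of agents is odd it is the unique metric median. -/
theorem coMajority_mem_metricMedian
    {X N : Type*} [SemilatticeSup X] [Fintype X] [Fintype N]
    (hud : UpperDistributive X) (hhelly : MeetHelly X)
    (x : N → X) (c : X)
    (hc : IsGLB {z | ∃ S : Finset N,
        (Fintype.card N + 2) / 2 ≤ S.card ∧ IsLUB (x '' ↑S) z} c) :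
    (∀ w : X, ∑ i, covDist c (x i) ≤ ∑ i, covDist w (x i)) ∧
    (Odd (Fintype.card N) →
      ∀ w : X, (∀ w' : X, ∑ i, covDist w (x i) ≤ ∑ i, covDist w' (x i)) → w = c) := by
  classical
  rcases isEmpty_or_nonempty N with hN | hN
  · constructor
    · intro w; simp
    · intro hodd
      rw [Fintype.card_eq_zero] at *
      simp [Nat.odd_iff] at hodd
  set n := Fintype.card N with hn
  set k := (n + 2) / 2 with hk
  have hn1 : 1 ≤ n := Fintype.card_pos
  set Z := {z | ∃ S : Finset N, k ≤ S.card ∧ IsLUB (x '' ↑S) z} with hZ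
  have hZne : Z.Nonempty := by
    refine ⟨(Finset.univ : Finset N).sup' Finset.univ_nonempty x, Finset.univ, ?_, ?_⟩
    · rw [Finset.card_univ]; omega
    · exact isLUB_sup'' _ x
  set a : X → ℕ := fun m => (Finset.univ.filter (fun i => x i ≤ m)).card with ha
  have han : ∀ m, a m ≤ n := fun m => le_trans (Finset.card_filter_le _ _) (by simp [hn])
  have claimC : ∀ m, MeetIrred m → (c ≤ m ↔ k ≤ a m) := by
    intro m hm
    constructor
    · intro hcm
      obtain ⟨z, hz, hzm⟩ := prime_set hud hm Z hZne c hc hcm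
      obtain ⟨S, hS, hSlub⟩ := hz
      refine le_trans hS (Finset.card_le_card ?_)
      intro i hi
      simp only [Finset.mem_filter, Finset.mem_univ, true_and]
      exact (hSlub.1 ⟨i, by exact_mod_cast hi, rfl⟩).trans hzm
    · intro ham
      set S := Finset.univ.filter (fun i => x i ≤ m) with hS
      have hScard : k ≤ S.card := ham
      have hSne : S.Nonempty := Finset.card_pos.1 (by omega)
      have hzm2 : S.sup' hSne x ≤ m :=
        Finset.sup'_le _ _ (fun i hi => by simpa [hS] using (Finset.mem_filter.1 hi).2)
      refine le_trans (hc.1 ?_) hzm2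
      exact ⟨S, ham, isLUB_sup'' hSne x⟩
  set cost : X → X → ℕ := fun w m =>
    (Finset.univ.filter (fun i => ¬ (w ≤ m ↔ x i ≤ m))).card with hcost
  have hcost_eq : ∀ w m, cost w m = if w ≤ m then n - a m else a m := by
    intro w m
    by_cases hw : w ≤ m
    · rw [if_pos hw, hcost]
      beta_reduce
      have : (Finset.univ.filter (fun i => ¬ (w ≤ m ↔ x i ≤ m)))
          = (Finset.univ.filter (fun i => x i ≤ m))ᶜ := by
        ext i
        simp [hw, Finset.mem_compl]
      rw [this, Finset.card_compl]
    · rw [if_neg hw, hcost, ha]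
      beta_reduce
      congr 1
      ext i
      simp only [Finset.mem_filter, Finset.mem_univ, true_and]
      constructor
      · intro h
        by_contra hxm
        exact h (iff_of_false hw hxm)
      · intro h hiff
        exact hw (hiff.2 h)
  have hsum : ∀ w, ∑ i, covDist w (x i) = ∑ m ∈ Mfin X, cost w m := by
    have hDd : ∀ w y : X, Dd w y = ∑ m ∈ Mfin X, (if ¬ (w ≤ m ↔ y ≤ m) then 1 else 0) := by
      intro w y
      rw [Dd, sep, Finset.card_filter]
      exact Finset.sum_congr rfl fun m _ => by
        by_cases h : ¬ (w ≤ m ↔ y ≤ m) <;> simp [h]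
    have hcost2 : ∀ w m : X, cost w m = ∑ i, (if ¬ (w ≤ m ↔ x i ≤ m) then 1 else 0) := by
      intro w m
      rw [hcost]
      beta_reduce
      rw [Finset.card_filter]
    intro w
    calc ∑ i, covDist w (x i)
        = ∑ i, ∑ m ∈ Mfin X, (if ¬ (w ≤ m ↔ x i ≤ m) then 1 else 0) := by
          refine Finset.sum_congr rfl (fun i _ => ?_)
          rw [covDist_eq hud, hDd]
      _ = ∑ m ∈ Mfin X, ∑ i, (if ¬ (w ≤ m ↔ x i ≤ m) then 1 else 0) := Finset.sum_comm
      _ = ∑ m ∈ Mfin X, cost w m := Finset.sum_congr rfl fun m _ => (hcost2 w m).symm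
  have hk2 : 2 * k ≥ n + 1 ∧ 2 * k ≤ n + 2 := by omega
  have hmem_Mfin : ∀ m, m ∈ Mfin X ↔ MeetIrred m := by
    intro m; simp [Mfin]
  have hkey : ∀ w m, m ∈ Mfin X → cost c m ≤ cost w m := by
    intro w m hm
    rw [hmem_Mfin] at hm
    rw [hcost_eq, hcost_eq]
    by_cases hcase : k ≤ a m
    · rw [if_pos ((claimC m hm).2 hcase)]
      have h2 : n - a m ≤ a m := by omega
      split <;> omega
    · rw [if_neg (fun h => hcase ((claimC m hm).1 h))]
      have h2 : a m ≤ n - a m := by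
        have := han m; omega
      split <;> omega
  constructor
  · intro w
    rw [hsum c, hsum w]
    exact Finset.sum_le_sum (fun m hm => hkey w m hm)
  · intro hodd w hw
    have h1 : ∑ m ∈ Mfin X, cost w m ≤ ∑ m ∈ Mfin X, cost c m := by
      rw [← hsum c, ← hsum w]; exact hw c
    have h2 : ∑ m ∈ Mfin X, cost c m ≤ ∑ m ∈ Mfin X, cost w m :=
      Finset.sum_le_sum (fun m hm => hkey w m hm)
    have heq : ∀ m ∈ Mfin X, cost c m = cost w m := by
      have := (Finset.sum_eq_sum_iff_of_le (fun m hm => hkey w m hm)).1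
        (le_antisymm h2 h1)
      exact fun m hm => (this m hm)
    have hoddn : n % 2 = 1 := Nat.odd_iff.1 (by rw [hn]; exact hodd)
    refine eq_of_sep_eq (fun m hm => ?_)
    have hcm := heq m ((hmem_Mfin m).2 hm)
    rw [hcost_eq, hcost_eq] at hcm
    have hanm := han m
    constructor
    · intro hwm
      rw [if_pos hwm] at hcm
      by_contra hcmle
      rw [if_neg hcmle] at hcm
      have : ¬ k ≤ a m := fun h => hcmle ((claimC m hm).2 h)
      omega
    · intro hcmle
      rw [if_pos hcmle] at hcm
      by_contra hwm
      rw [if_neg hwm] at hcm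
      have : k ≤ a m := (claimC m hm).1 hcmle
      omega
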